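/- Let a < b be real numbers and let f : ℝ → ℝ be monotone nondecreasing on [a, b]. Then ∫_a^b ∫_a^b min(f(x), f(y)) dx dy = 2 ∫_a^b f(x)(b − x) dx. -/

import Mathlib

open MeasureTheory intervalIntegral Set

lemma swap_triangle (g : ℝ → ℝ) (hg : Monotone g) (a b : ℝ) (hab : a ≤ b) :
    (∫ y in a..b, (∫ x in a..y, g x)) = ∫ x in a..b, g x * (b - x) := by
  have hC : ∀ x ∈ Set.Ioc a b, ‖g x‖ ≤ max ‖g a‖ ‖g b‖ := by
    intro x hx
    rw [Real.norm_eq_abs, Real.norm_eq_abs, Real.norm_eq_abs, abs_le]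
    constructor
    · have := hg hx.1.le
      have h2 := neg_abs_le (g a)
      refine le_trans (le_trans ?_ h2) this
      simp [neg_le_neg_iff]
    · exact le_trans (hg hx.2) (le_trans (le_abs_self _) (le_max_right _ _))
  set F : ℝ → ℝ → ℝ := fun x y => if x ≤ y then g x else 0 with hF
  have hint : Integrable (Function.uncurry fun y x => F x y)
      ((volume.restrict (Set.Ioc a b)).prod (volume.restrict (Set.Ioc a b))) := by
    rw [Measure.prod_restrict]
    haveI : IsFiniteMeasure ((volume.prod volume).restrict (Set.Ioc a b ×ˢ Set.Ioc a b)) := by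
      refine ⟨?_⟩
      rw [Measure.restrict_apply_univ, Measure.prod_prod]
      exact ENNReal.mul_lt_top measure_Ioc_lt_top measure_Ioc_lt_top
    have hmeas : Measurable (Function.uncurry fun y x => F x y) := by
      apply Measurable.ite (measurableSet_le measurable_snd measurable_fst)
      · exact hg.measurable.comp measurable_snd
      · exact measurable_const
    refine Integrable.mono' (integrable_const (max ‖g a‖ ‖g b‖))
      hmeas.aestronglyMeasurable ?_
    filter_upwards [ae_restrict_mem (measurableSet_Ioc.prod measurableSet_Ioc)] with p hp
    rcases p with ⟨y, x⟩
    simp only [Function.uncurry, hF]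
    split_ifs with h
    · exact hC x hp.2
    · simp
  rw [intervalIntegral.integral_of_le hab, intervalIntegral.integral_of_le hab]
  have step1 : (∫ y in Set.Ioc a b, ∫ x in a..y, g x)
      = ∫ y in Set.Ioc a b, ∫ x in Set.Ioc a b, F x y := by
    refine setIntegral_congr_fun measurableSet_Ioc (fun y hy => ?_)
    have : ∀ x, F x y = (Set.Iic y).indicator g x := by
      intro x; simp [hF, Set.indicator, Set.mem_Iic]
    simp only [this]
    rw [setIntegral_indicator measurableSet_Iic, Set.Ioc_inter_Iic,
      min_eq_right hy.2, intervalIntegral.integral_of_le hy.1.le]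
  rw [step1, MeasureTheory.integral_integral_swap hint]
  refine setIntegral_congr_fun measurableSet_Ioc (fun x hx => ?_)
  have hFi : ∀ y, F x y = (Set.Ici x).indicator (fun _ => g x) y := by
    intro y; simp [hF, Set.indicator, Set.mem_Ici]
  simp only [hFi]
  rw [setIntegral_indicator measurableSet_Ici]
  have hset : Set.Ioc a b ∩ Set.Ici x = Set.Icc x b := by
    ext y
    simp only [Set.mem_inter_iff, Set.mem_Ioc, Set.mem_Ici, Set.mem_Icc]
    constructor
    · rintro ⟨⟨_, h2⟩, h3⟩; exact ⟨h3, h2⟩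
    · rintro ⟨h1, h2⟩; exact ⟨⟨lt_of_lt_of_le hx.1 h1, h2⟩, h1⟩
  rw [hset, setIntegral_const, measureReal_def, Real.volume_Icc, ENNReal.toReal_ofReal (by linarith [hx.2])]
  rw [smul_eq_mul, mul_comm]

lemma qIntegral_monotone_global (g : ℝ → ℝ) (hg : Monotone g) (a b : ℝ) (hab : a ≤ b) :
    (∫ y in a..b, ∫ x in a..b, min (g x) (g y)) = 2 * ∫ x in a..b, g x * (b - x) := by
  have hgi : ∀ c d : ℝ, IntervalIntegrable g volume c d := fun c d =>
    hg.intervalIntegrable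
  have hmin : ∀ (y : ℝ) (c d : ℝ),
      IntervalIntegrable (fun x => min (g x) (g y)) volume c d := fun y c d =>
    (hg.min monotone_const).intervalIntegrable
  have inner : ∀ y ∈ Set.uIcc a b,
      (∫ x in a..b, min (g x) (g y)) = (∫ x in a..y, g x) + g y * (b - y) := by
    intro y hy
    rw [Set.uIcc_of_le hab] at hy
    rw [← intervalIntegral.integral_add_adjacent_intervals (hmin y a y) (hmin y y b)]
    congr 1
    · refine intervalIntegral.integral_congr (fun x hx => ?_)
      rw [Set.uIcc_of_le hy.1] at hx
      exact min_eq_left (hg hx.2)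
    · rw [show (∫ x in y..b, min (g x) (g y)) = ∫ _x in y..b, g y from
        intervalIntegral.integral_congr (fun x hx => by
          rw [Set.uIcc_of_le hy.2] at hx
          exact min_eq_right (hg hx.1))]
      rw [intervalIntegral.integral_const, smul_eq_mul, mul_comm]
  rw [intervalIntegral.integral_congr inner]
  have hprim : Continuous fun y => ∫ x in a..y, g x :=
    intervalIntegral.continuous_primitive hgi a
  have h1 : IntervalIntegrable (fun y => ∫ x in a..y, g x) volume a b :=
    hprim.intervalIntegrable a b
  have h2 : IntervalIntegrable (fun y => g y * (b - y)) volume a b :=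
    (hgi a b).mul_continuousOn (by fun_prop)
  rw [intervalIntegral.integral_add h1 h2, swap_triangle g hg a b hab]
  ring

theorem qIntegral_monotone (a b : ℝ) (hab : a < b) (f : ℝ → ℝ)
    (hf : MonotoneOn f (Set.Icc a b)) :
    (∫ y in a..b, ∫ x in a..b, min (f x) (f y)) = 2 * ∫ x in a..b, f x * (b - x) := by
  set g : ℝ → ℝ := fun x => f (max a (min x b)) with hgdef
  have hmem : ∀ x : ℝ, max a (min x b) ∈ Set.Icc a b := fun x =>
    ⟨le_max_left _ _, max_le hab.le (min_le_right _ _)⟩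
  have hg : Monotone g := by
    intro x y hxy
    exact hf (hmem x) (hmem y) (max_le_max le_rfl (min_le_min_right _ hxy))
  have heq : ∀ x ∈ Set.Icc a b, g x = f x := by
    intro x hx
    simp [hgdef, min_eq_left hx.2, max_eq_right hx.1]
  have key := qIntegral_monotone_global g hg a b hab.le
  have huIcc : Set.uIcc a b = Set.Icc a b := Set.uIcc_of_le hab.le
  have hL : (∫ y in a..b, ∫ x in a..b, min (f x) (f y))
      = ∫ y in a..b, ∫ x in a..b, min (g x) (g y) := by
    refine intervalIntegral.integral_congr (fun y hy => ?_)
    refine intervalIntegral.integral_congr (fun x hx => ?_)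
    rw [huIcc] at hx hy
    rw [heq x hx, heq y hy]
  have hR : (∫ x in a..b, f x * (b - x)) = ∫ x in a..b, g x * (b - x) := by
    refine intervalIntegral.integral_congr (fun x hx => ?_)
    rw [huIcc] at hx
    rw [heq x hx]
  rw [hL, hR, key]
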